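/- Let (X,μ,T) be a topological dynamical system with Borel probability measure μ. Then (X,T) is μ-mean equicontinuous (for every κ > 0 there is a compact M with μ(M) > 1-κ on which the Besicovitch projection f_b is continuous) if and only if there exists a set X' ⊆ X with μ(X') = 1 such that the quotient metric space (X'/d_b, d_b) is separable. -/

import Mathlib

open Filter Metric Set
open scoped Classical

noncomputable def lowerDensity (S : Set ℕ) : ℝ :=
  Filter.atTop.liminf (fun n => (((Finset.range (n + 1)).filter (fun i => i ∈ S)).card : ℝ) / (n + 1))

noncomputable def upperDensity (S : Set ℕ) : ℝ :=
  Filter.atTop.limsup (fun n => (((Finset.range (n + 1)).filter (fun i => i ∈ S)).card : ℝ) / (n + 1))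

noncomputable def besicovitch {X : Type*} [MetricSpace X] (T : X → X) (x y : X) : ℝ :=
  sInf {δ : ℝ | 0 < δ ∧ upperDensity {i : ℕ | δ < dist (T^[i] x) (T^[i] y)} < δ}

open MeasureTheory
open scoped ENNReal

/-! ### Auxiliary density lemmas -/

noncomputable def MMcnt (S : Set ℕ) (n : ℕ) : ℝ :=
  (((Finset.range (n + 1)).filter (fun i => i ∈ S)).card : ℝ) / (n + 1)

lemma upperDensity_eq (S : Set ℕ) : upperDensity S = Filter.limsup (MMcnt S) Filter.atTop := rfl

lemma MMcnt_nonneg (S : Set ℕ) (n : ℕ) : 0 ≤ MMcnt S n := by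
  unfold MMcnt; positivity

lemma MMcnt_le_one (S : Set ℕ) (n : ℕ) : MMcnt S n ≤ 1 := by
  unfold MMcnt
  rw [div_le_one (by positivity)]
  calc (((Finset.range (n + 1)).filter (fun i => i ∈ S)).card : ℝ)
      ≤ ((Finset.range (n + 1)).card : ℝ) := by
        exact_mod_cast Finset.card_le_card (Finset.filter_subset _ _)
    _ = (n + 1 : ℝ) := by simp

lemma MMcnt_bddAbove (S : Set ℕ) : IsBoundedUnder (· ≤ ·) atTop (MMcnt S) :=
  isBoundedUnder_of ⟨1, MMcnt_le_one S⟩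

lemma MMcnt_bddBelow (S : Set ℕ) : IsBoundedUnder (· ≥ ·) atTop (MMcnt S) :=
  isBoundedUnder_of ⟨0, MMcnt_nonneg S⟩

lemma MMcnt_mono {A B : Set ℕ} (h : A ⊆ B) (n : ℕ) : MMcnt A n ≤ MMcnt B n := by
  unfold MMcnt
  gcongr

lemma upperDensity_mono {A B : Set ℕ} (h : A ⊆ B) : upperDensity A ≤ upperDensity B := by
  rw [upperDensity_eq, upperDensity_eq]
  exact limsup_le_limsup (Eventually.of_forall (MMcnt_mono h))
    (MMcnt_bddBelow A).isCoboundedUnder_le (MMcnt_bddAbove B)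

lemma MMcnt_union_le (A B : Set ℕ) (n : ℕ) : MMcnt (A ∪ B) n ≤ MMcnt A n + MMcnt B n := by
  unfold MMcnt
  rw [← add_div]
  gcongr
  have hsub : (@Finset.filter ℕ (fun i => i ∈ A ∪ B)
      (fun a => Classical.propDecidable (a ∈ A ∪ B)) (Finset.range (n + 1))) ⊆
      ((Finset.range (n + 1)).filter (fun i => i ∈ A)) ∪
        ((Finset.range (n + 1)).filter (fun i => i ∈ B)) := by
    intro i hi
    simp only [Finset.mem_filter, Finset.mem_union, Set.mem_union] at *
    tauto
  have hcard := (Finset.card_le_card hsub).trans (Finset.card_union_le _ _)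
  exact_mod_cast hcard

lemma upperDensity_union_le (A B : Set ℕ) :
    upperDensity (A ∪ B) ≤ upperDensity A + upperDensity B := by
  rw [upperDensity_eq, upperDensity_eq, upperDensity_eq]
  have h1 : Filter.limsup (MMcnt (A ∪ B)) atTop ≤ Filter.limsup (MMcnt A + MMcnt B) atTop := by
    refine limsup_le_limsup (Eventually.of_forall (MMcnt_union_le A B))
      (MMcnt_bddBelow (A ∪ B)).isCoboundedUnder_le ?_
    exact isBoundedUnder_of ⟨2, fun n => by
      have := MMcnt_le_one A n; have := MMcnt_le_one B n
      simp only [Pi.add_apply]; linarith⟩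
  exact h1.trans (limsup_add_le (MMcnt_bddBelow A) (MMcnt_bddAbove A)
    (MMcnt_bddBelow B).isCoboundedUnder_le (MMcnt_bddAbove B))

lemma upperDensity_nonneg (S : Set ℕ) : 0 ≤ upperDensity S := by
  rw [upperDensity_eq]
  exact le_limsup_of_frequently_le (Frequently.of_forall (MMcnt_nonneg S)) (MMcnt_bddAbove S)

lemma upperDensity_empty : upperDensity (∅ : Set ℕ) = 0 := by
  have h : (fun n : ℕ =>
      (((Finset.range (n + 1)).filter (fun i => i ∈ (∅ : Set ℕ))).card : ℝ) / (n + 1))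
      = fun _ => (0 : ℝ) := by
    funext n; simp
  rw [upperDensity]
  simp only [Set.mem_empty_iff_false, Finset.filter_false, Finset.card_empty, Nat.cast_zero,
    zero_div]
  exact limsup_const 0

/-! ### Besicovitch pseudometric lemmas -/

section Bes

variable {X : Type*} [MetricSpace X] (T : X → X)

def besSet (x y : X) : Set ℝ :=
  {δ : ℝ | 0 < δ ∧ upperDensity {i : ℕ | δ < dist (T^[i] x) (T^[i] y)} < δ}

lemma besicovitch_eq_sInf (x y : X) : besicovitch T x y = sInf (besSet T x y) := rfl

lemma besSet_bddBelow (x y : X) : BddBelow (besSet T x y) :=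
  ⟨0, fun _ hδ => hδ.1.le⟩

lemma besSet_upward {x y : X} {δ δ' : ℝ} (h : δ ∈ besSet T x y) (hle : δ ≤ δ') :
    δ' ∈ besSet T x y := by
  refine ⟨lt_of_lt_of_le h.1 hle, ?_⟩
  exact lt_of_le_of_lt
    (upperDensity_mono (fun i hi => lt_of_le_of_lt hle hi))
    (lt_of_lt_of_le h.2 hle)

lemma besSet_nonempty [CompactSpace X] (x y : X) : (besSet T x y).Nonempty := by
  refine ⟨diam (univ : Set X) + 1, by positivity, ?_⟩
  have h : {i : ℕ | diam (univ : Set X) + 1 < dist (T^[i] x) (T^[i] y)} = (∅ : Set ℕ) := by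
    ext i
    simp only [mem_setOf_eq, mem_empty_iff_false, iff_false, not_lt]
    have := dist_le_diam_of_mem isCompact_univ.isBounded
      (mem_univ (T^[i] x)) (mem_univ (T^[i] y))
    linarith
  rw [h, upperDensity_empty]
  positivity

lemma besicovitch_le_of_mem {x y : X} {δ : ℝ} (h : δ ∈ besSet T x y) :
    besicovitch T x y ≤ δ :=
  csInf_le (besSet_bddBelow T x y) h

lemma exists_mem_lt_of_bes_lt [CompactSpace X] {x y : X} {ε : ℝ}
    (h : besicovitch T x y < ε) : ∃ δ ∈ besSet T x y, δ < ε :=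
  exists_lt_of_csInf_lt (besSet_nonempty T x y) h

lemma upperDensity_lt_of_bes_lt [CompactSpace X] {x y : X} {ε : ℝ}
    (h : besicovitch T x y < ε) :
    upperDensity {i : ℕ | ε < dist (T^[i] x) (T^[i] y)} < ε := by
  obtain ⟨δ, hδ, hδε⟩ := exists_mem_lt_of_bes_lt T h
  exact lt_of_le_of_lt
    (upperDensity_mono (fun i hi => hδε.trans hi)) (hδ.2.trans hδε)

lemma besicovitch_symm (x y : X) : besicovitch T x y = besicovitch T y x := by
  unfold besicovitch
  congr 1
  ext δ
  have h : {i : ℕ | δ < dist (T^[i] x) (T^[i] y)} = {i : ℕ | δ < dist (T^[i] y) (T^[i] x)} := by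
    ext i; simp [dist_comm]
  simp only [mem_setOf_eq, h]

lemma besicovitch_triangle [CompactSpace X] (x y z : X) :
    besicovitch T x z ≤ besicovitch T x y + besicovitch T y z := by
  refine le_of_forall_pos_le_add fun ε hε => ?_
  obtain ⟨δ₁, hδ₁, h1⟩ := exists_lt_of_csInf_lt (besSet_nonempty T x y)
    (lt_add_of_pos_right (besicovitch T x y) (half_pos hε))
  obtain ⟨δ₂, hδ₂, h2⟩ := exists_lt_of_csInf_lt (besSet_nonempty T y z)
    (lt_add_of_pos_right (besicovitch T y z) (half_pos hε))
  have hmem : δ₁ + δ₂ ∈ besSet T x z := by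
    refine ⟨add_pos hδ₁.1 hδ₂.1, ?_⟩
    have hsub : {i : ℕ | δ₁ + δ₂ < dist (T^[i] x) (T^[i] z)} ⊆
        {i : ℕ | δ₁ < dist (T^[i] x) (T^[i] y)} ∪ {i : ℕ | δ₂ < dist (T^[i] y) (T^[i] z)} := by
      intro i hi
      simp only [mem_setOf_eq, Set.mem_union] at *
      by_contra hcon
      push_neg at hcon
      have htri := dist_triangle (T^[i] x) (T^[i] y) (T^[i] z)
      obtain ⟨hc1, hc2⟩ := hcon
      linarith
    calc upperDensity {i : ℕ | δ₁ + δ₂ < dist (T^[i] x) (T^[i] z)}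
        ≤ upperDensity ({i : ℕ | δ₁ < dist (T^[i] x) (T^[i] y)} ∪
            {i : ℕ | δ₂ < dist (T^[i] y) (T^[i] z)}) := upperDensity_mono hsub
      _ ≤ upperDensity {i : ℕ | δ₁ < dist (T^[i] x) (T^[i] y)} +
            upperDensity {i : ℕ | δ₂ < dist (T^[i] y) (T^[i] z)} := upperDensity_union_le _ _
      _ < δ₁ + δ₂ := add_lt_add hδ₁.2 hδ₂.2
  calc besicovitch T x z ≤ δ₁ + δ₂ := besicovitch_le_of_mem T hmem
    _ ≤ besicovitch T x y + besicovitch T y z + ε := by linarith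

/-! ### Measurability -/

variable [MeasurableSpace X] [BorelSpace X]

lemma measurable_MMcnt (hT : Continuous T) (y : X) (q : ℝ) (n : ℕ) :
    Measurable (fun x => MMcnt {i : ℕ | q < dist (T^[i] x) (T^[i] y)} n) := by
  have h : (fun x => MMcnt {i : ℕ | q < dist (T^[i] x) (T^[i] y)} n)
      = fun x => (∑ i ∈ Finset.range (n + 1),
          if q < dist (T^[i] x) (T^[i] y) then (1 : ℝ) else 0) / (n + 1) := by
    funext x
    unfold MMcnt
    rw [Finset.card_filter]
    push_cast
    simp only [mem_setOf_eq]
  rw [h]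
  apply Measurable.div_const
  apply Finset.measurable_sum
  intro i _
  exact Measurable.ite
    (isOpen_lt continuous_const ((hT.iterate i).dist continuous_const)).measurableSet
    measurable_const measurable_const

lemma measurableSet_U (hT : Continuous T) (y : X) (q : ℝ) :
    MeasurableSet {x : X | upperDensity {i : ℕ | q < dist (T^[i] x) (T^[i] y)} < q} := by
  have heq : {x : X | upperDensity {i : ℕ | q < dist (T^[i] x) (T^[i] y)} < q}
      = ⋃ (r : ℚ), ⋃ (_ : (r : ℝ) < q), ⋃ (N : ℕ), ⋂ (n : ℕ), ⋂ (_ : N ≤ n),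
          {x : X | MMcnt {i : ℕ | q < dist (T^[i] x) (T^[i] y)} n ≤ (r : ℝ)} := by
    ext x
    simp only [mem_setOf_eq, mem_iUnion, mem_iInter]
    constructor
    · intro h
      obtain ⟨r, hr1, hr2⟩ := exists_rat_btwn h
      rw [upperDensity_eq] at hr1
      have hev : ∀ᶠ n in atTop,
          MMcnt {i : ℕ | q < dist (T^[i] x) (T^[i] y)} n < (r : ℝ) :=
        eventually_lt_of_limsup_lt hr1 (MMcnt_bddAbove _)
      obtain ⟨N, hN⟩ := eventually_atTop.1 hev
      exact ⟨r, hr2, N, fun n hn => (hN n hn).le⟩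
    · rintro ⟨r, hrq, N, hN⟩
      have hle : upperDensity {i : ℕ | q < dist (T^[i] x) (T^[i] y)} ≤ (r : ℝ) := by
        rw [upperDensity_eq]
        exact limsup_le_of_le (MMcnt_bddBelow _).isCoboundedUnder_le
          (eventually_atTop.2 ⟨N, hN⟩)
      exact hle.trans_lt hrq
  rw [heq]
  exact MeasurableSet.iUnion fun r => MeasurableSet.iUnion fun _ =>
    MeasurableSet.iUnion fun N => MeasurableSet.iInter fun n => MeasurableSet.iInter fun _ =>
      measurableSet_le (measurable_MMcnt T hT y q n) measurable_const

lemma measurableSet_besLt [CompactSpace X] (hT : Continuous T) (y : X) (ε : ℝ) :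
    MeasurableSet {x : X | besicovitch T x y < ε} := by
  have heq : {x : X | besicovitch T x y < ε}
      = ⋃ (p : ℚ), ⋃ (_ : 0 < (p : ℝ) ∧ (p : ℝ) < ε),
          {x : X | upperDensity {i : ℕ | (p : ℝ) < dist (T^[i] x) (T^[i] y)} < (p : ℝ)} := by
    ext x
    simp only [mem_setOf_eq, mem_iUnion]
    constructor
    · intro h
      obtain ⟨δ, hδ, hδε⟩ := exists_mem_lt_of_bes_lt T h
      obtain ⟨p, hp1, hp2⟩ := exists_rat_btwn hδε
      have hpmem := besSet_upward T hδ hp1.le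
      exact ⟨p, ⟨hδ.1.trans hp1, hp2⟩, hpmem.2⟩
    · rintro ⟨p, ⟨hp0, hpε⟩, h⟩
      exact lt_of_le_of_lt (besicovitch_le_of_mem T ⟨hp0, h⟩) hpε
  rw [heq]
  exact MeasurableSet.iUnion fun p => MeasurableSet.iUnion fun _ => measurableSet_U T hT y p

end Bes

/-! ### Geometric series helper -/

lemma MMgeom_aux (c : ℝ≥0∞) (m : ℕ) : ∑' j : ℕ, c * 2⁻¹ ^ (m + 1 + j) = c * 2⁻¹ ^ m := by
  rw [ENNReal.tsum_mul_left]
  congr 1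
  calc ∑' j : ℕ, (2⁻¹ : ℝ≥0∞) ^ (m + 1 + j)
      = ∑' j : ℕ, (2⁻¹ : ℝ≥0∞) ^ (m + 1) * 2⁻¹ ^ j := by
        refine tsum_congr fun j => ?_
        rw [pow_add]
    _ = (2⁻¹ : ℝ≥0∞) ^ (m + 1) * (1 - 2⁻¹)⁻¹ := by
        rw [ENNReal.tsum_mul_left, ENNReal.tsum_geometric]
    _ = (2⁻¹ : ℝ≥0∞) ^ m := by
        rw [ENNReal.one_sub_inv_two, inv_inv, pow_succ, mul_assoc,
          ENNReal.inv_mul_cancel (by norm_num) (by norm_num), mul_one]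

theorem muMeanEq_iff_separable {X : Type*} [MetricSpace X] [CompactSpace X]
    [MeasurableSpace X] [BorelSpace X]
    (T : X → X) (hT : Continuous T) (μ : Measure X) [IsProbabilityMeasure μ] :
    (∀ κ > (0 : ℝ), ∃ M : Set X, IsCompact M ∧ ENNReal.ofReal (1 - κ) < μ M ∧
      ∀ x ∈ M, ∀ ε > (0 : ℝ), ∃ δ > (0 : ℝ), ∀ y ∈ M, dist x y ≤ δ →
        upperDensity {i : ℕ | ε < dist (T^[i] x) (T^[i] y)} < ε) ↔
    (∃ X' : Set X, μ X' = 1 ∧ ∃ D ⊆ X', D.Countable ∧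
      ∀ x ∈ X', ∀ ε > (0 : ℝ), ∃ y ∈ D, besicovitch T x y < ε) := by
  constructor
  · -- Forward direction
    intro h
    choose M hMc hMμ hMP using fun n : ℕ => h (1 / (n + 1)) (by positivity)
    choose t ht hct hclos using fun n : ℕ =>
      EMetric.subset_countable_closure_of_compact (hMc n)
    refine ⟨⋃ n, M n, ?_, ⋃ n, t n, iUnion_mono ht, countable_iUnion hct, ?_⟩
    · refine le_antisymm prob_le_one ?_
      have htend : Tendsto (fun n : ℕ => ENNReal.ofReal (1 - 1 / ((n : ℝ) + 1))) atTop
          (nhds 1) := by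
        have h0 : Tendsto (fun n : ℕ => 1 - 1 / ((n : ℝ) + 1)) atTop (nhds 1) := by
          have h00 := tendsto_one_div_add_atTop_nhds_zero_nat (𝕜 := ℝ)
          have h1 : Tendsto (fun n : ℕ => (1 : ℝ) - 1 / ((n : ℝ) + 1)) atTop (nhds (1 - 0)) :=
            Tendsto.sub tendsto_const_nhds h00
          simpa using h1
        have h2 := ENNReal.tendsto_ofReal h0
        simpa using h2
      refine le_of_tendsto' htend fun n => ?_
      exact (hMμ n).le.trans (measure_mono (subset_iUnion M n))
    · intro x hx ε hε
      obtain ⟨n, hxn⟩ := mem_iUnion.1 hx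
      obtain ⟨δ, hδ, hP⟩ := hMP n x hxn (ε / 2) (half_pos hε)
      obtain ⟨y, hyt, hxy⟩ := Metric.mem_closure_iff.1 (hclos n hxn) δ hδ
      refine ⟨y, mem_iUnion.2 ⟨n, hyt⟩, ?_⟩
      have hud := hP y (ht n hyt) hxy.le
      have hb : besicovitch T x y ≤ ε / 2 :=
        besicovitch_le_of_mem T ⟨half_pos hε, hud⟩
      linarith
  · -- Backward direction
    rintro ⟨X', hX', D, hDX', hDc, hdense⟩
    intro κ hκ
    -- D is nonempty
    have hDne : D.Nonempty := by
      rcases eq_empty_or_nonempty D with hD | hD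
      · exfalso
        have hX'e : X' = ∅ := by
          rcases eq_empty_or_nonempty X' with h' | ⟨x, hx⟩
          · exact h'
          · obtain ⟨y, hy, -⟩ := hdense x hx 1 one_pos
            rw [hD] at hy
            exact absurd hy (notMem_empty y)
        rw [hX'e] at hX'
        simp at hX'
      · exact hD
    obtain ⟨f, hf⟩ := hDc.exists_eq_range hDne
    set κ₀ : ℝ := min κ 2⁻¹ with hκ₀def
    have hκ₀pos : 0 < κ₀ := lt_min hκ (by norm_num)
    have hκ₀le : κ₀ ≤ 2⁻¹ := min_le_right _ _
    set b : ℝ≥0∞ := ENNReal.ofReal κ₀ with hbdef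
    have hb0 : b ≠ 0 := (ENNReal.ofReal_pos.2 hκ₀pos).ne'
    have hbtop : b ≠ ⊤ := ENNReal.ofReal_ne_top
    -- the covering sets
    set C : ℕ → ℕ → Set X := fun k j => {x | besicovitch T x (f j) < 2⁻¹ ^ k} with hC
    have hCmeas : ∀ k j, MeasurableSet (C k j) := fun k j =>
      measurableSet_besLt T hT (f j) ((2 : ℝ)⁻¹ ^ k)
    set E : ℕ → ℕ → Set X := fun k j => C k j \ ⋃ (i : ℕ), ⋃ (_ : i < j), C k i with hE
    have hEmeas : ∀ k j, MeasurableSet (E k j) := fun k j =>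
      (hCmeas k j).diff (MeasurableSet.iUnion fun i => MeasurableSet.iUnion fun _ => hCmeas k i)
    have hEC : ∀ k j, E k j ⊆ C k j := fun k j => diff_subset
    have hEdisj : ∀ k j j', j < j' → ∀ x, x ∈ E k j → x ∈ E k j' → False := by
      intro k j j' hlt x hj hj'
      exact hj'.2 (mem_iUnion.2 ⟨j, mem_iUnion.2 ⟨hlt, hj.1⟩⟩)
    have hcover : ∀ k, X' ⊆ ⋃ j, E k j := by
      intro k x hx
      have hex : ∃ j, x ∈ C k j := by
        obtain ⟨y, hy, hlt⟩ := hdense x hx ((2 : ℝ)⁻¹ ^ k) (by positivity)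
        rw [hf] at hy
        obtain ⟨j, rfl⟩ := hy
        exact ⟨j, hlt⟩
      refine mem_iUnion.2 ⟨Nat.find hex, Nat.find_spec hex, ?_⟩
      intro hmem
      obtain ⟨i, hi⟩ := mem_iUnion.1 hmem
      obtain ⟨hilt, hxi⟩ := mem_iUnion.1 hi
      exact Nat.find_min hex hilt hxi
    have hEfull : ∀ k, μ (⋃ j, E k j) = 1 := fun k =>
      le_antisymm prob_le_one (hX' ▸ measure_mono (hcover k))
    -- choose a finite subcover at level k up to measure b * 2⁻¹ ^ (k+3)
    have hJex : ∀ k : ℕ, ∃ J : ℕ, 1 - b * 2⁻¹ ^ (k + 3) < μ (Set.accumulate (E k) J) := by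
      intro k
      have htend := tendsto_measure_iUnion_accumulate (μ := μ) (f := E k)
      rw [hEfull k] at htend
      have hlt : 1 - b * 2⁻¹ ^ (k + 3) < 1 :=
        ENNReal.sub_lt_self ENNReal.one_ne_top one_ne_zero
          (mul_ne_zero hb0 (pow_ne_zero _ (by simp)))
      exact (htend.eventually (eventually_gt_nhds hlt)).exists
    choose J hJ using hJex
    -- choose compact subsets
    have hFex : ∀ k j : ℕ, ∃ F, F ⊆ E k j ∧ IsCompact F ∧
        μ (E k j \ F) < b * 2⁻¹ ^ (k + 4 + j) := fun k j =>
      (hEmeas k j).exists_isCompact_diff_lt (measure_ne_top μ _)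
        (mul_ne_zero hb0 (pow_ne_zero _ (by simp)))
    choose F hFE hFc hFμ using hFex
    set K : ℕ → Set X := fun k => ⋃ j ∈ Finset.range (J k + 1), F k j with hK
    have hKc : ∀ k, IsCompact (K k) :=
      fun k => (Finset.range (J k + 1)).finite_toSet.isCompact_biUnion (fun j _ => hFc k j)
    have hAccmeas : ∀ k, MeasurableSet (Set.accumulate (E k) (J k)) := by
      intro k
      rw [accumulate_def]
      exact MeasurableSet.iUnion fun j => MeasurableSet.iUnion fun _ => hEmeas k j
    -- measure bound for the complement of K k
    have hKcompl : ∀ k, μ ((K k)ᶜ) ≤ b * 2⁻¹ ^ (k + 2) := by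
      intro k
      have hsmall : b * 2⁻¹ ^ (k + 3) ≤ 1 := by
        have h1 : b ≤ 1 := by
          rw [hbdef, ← ENNReal.ofReal_one]
          exact ENNReal.ofReal_le_ofReal (by linarith [hκ₀le])
        have h2 : (2 : ℝ≥0∞)⁻¹ ^ (k + 3) ≤ 1 :=
          pow_le_one' (ENNReal.inv_le_one.2 one_le_two) _
        calc b * 2⁻¹ ^ (k + 3) ≤ 1 * 1 := mul_le_mul' h1 h2
          _ = 1 := one_mul 1
      have h1 : μ ((Set.accumulate (E k) (J k))ᶜ) ≤ b * 2⁻¹ ^ (k + 3) := by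
        rw [prob_compl_eq_one_sub (hAccmeas k)]
        refine tsub_le_iff_right.2 ?_
        calc (1 : ℝ≥0∞) = b * 2⁻¹ ^ (k + 3) + (1 - b * 2⁻¹ ^ (k + 3)) :=
              (add_tsub_cancel_of_le hsmall).symm
          _ ≤ b * 2⁻¹ ^ (k + 3) + μ (Set.accumulate (E k) (J k)) :=
              add_le_add le_rfl (hJ k).le
      have hGsub : Set.accumulate (E k) (J k) \ K k ⊆
          ⋃ j ∈ Finset.range (J k + 1), (E k j \ F k j) := by
        intro x hx
        obtain ⟨hxG, hxK⟩ := hx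
        rw [accumulate_def] at hxG
        obtain ⟨j, hj⟩ := mem_iUnion.1 hxG
        obtain ⟨hjle, hxj⟩ := mem_iUnion.1 hj
        have hjr : j ∈ Finset.range (J k + 1) := Finset.mem_range.2 (Nat.lt_succ_of_le hjle)
        have hxF : x ∉ F k j := fun hc => hxK (mem_iUnion.2 ⟨j, mem_iUnion.2 ⟨hjr, hc⟩⟩)
        exact mem_iUnion.2 ⟨j, mem_iUnion.2 ⟨hjr, hxj, hxF⟩⟩
      have h2 : μ (Set.accumulate (E k) (J k) \ K k) ≤ b * 2⁻¹ ^ (k + 3) := by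
        calc μ (Set.accumulate (E k) (J k) \ K k)
            ≤ μ (⋃ j ∈ Finset.range (J k + 1), (E k j \ F k j)) := measure_mono hGsub
          _ ≤ ∑ j ∈ Finset.range (J k + 1), μ (E k j \ F k j) :=
              measure_biUnion_finset_le _ _
          _ ≤ ∑ j ∈ Finset.range (J k + 1), b * 2⁻¹ ^ (k + 4 + j) :=
              Finset.sum_le_sum fun j _ => (hFμ k j).le
          _ ≤ ∑' j : ℕ, b * 2⁻¹ ^ (k + 4 + j) := ENNReal.sum_le_tsum _
          _ = ∑' j : ℕ, b * 2⁻¹ ^ ((k + 3) + 1 + j) := by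
              refine tsum_congr fun j => ?_
              rw [show k + 4 + j = (k + 3) + 1 + j from by omega]
          _ = b * 2⁻¹ ^ (k + 3) := MMgeom_aux b (k + 3)
      have hsplit : (K k)ᶜ ⊆ (Set.accumulate (E k) (J k))ᶜ ∪ (Set.accumulate (E k) (J k) \ K k) := by
        intro x hx
        by_cases hxG : x ∈ Set.accumulate (E k) (J k)
        · exact Or.inr ⟨hxG, hx⟩
        · exact Or.inl hxG
      calc μ ((K k)ᶜ)
          ≤ μ ((Set.accumulate (E k) (J k))ᶜ ∪ (Set.accumulate (E k) (J k) \ K k)) :=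
            measure_mono hsplit
        _ ≤ μ ((Set.accumulate (E k) (J k))ᶜ) + μ (Set.accumulate (E k) (J k) \ K k) :=
            measure_union_le _ _
        _ ≤ b * 2⁻¹ ^ (k + 3) + b * 2⁻¹ ^ (k + 3) := add_le_add h1 h2
        _ = b * (2⁻¹ ^ (k + 3) + 2⁻¹ ^ (k + 3)) := by rw [mul_add]
        _ = b * 2⁻¹ ^ (k + 2) := by
            congr 1
            calc (2⁻¹ : ℝ≥0∞) ^ (k + 3) + 2⁻¹ ^ (k + 3)
                = 2⁻¹ ^ (k + 2) * 2⁻¹ + 2⁻¹ ^ (k + 2) * 2⁻¹ := by rw [pow_succ]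
              _ = 2⁻¹ ^ (k + 2) * (2⁻¹ + 2⁻¹) := by rw [mul_add]
              _ = 2⁻¹ ^ (k + 2) := by rw [ENNReal.inv_two_add_inv_two, mul_one]
    -- the compact set M
    refine ⟨⋂ k, K k, (isClosed_iInter fun k => (hKc k).isClosed).isCompact, ?_, ?_⟩
    · -- measure bound
      have hMcompl : μ ((⋂ k, K k)ᶜ) ≤ b * 2⁻¹ := by
        rw [compl_iInter]
        calc μ (⋃ k, (K k)ᶜ) ≤ ∑' k, μ ((K k)ᶜ) := measure_iUnion_le _
          _ ≤ ∑' k : ℕ, b * 2⁻¹ ^ (1 + 1 + k) := by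
              refine ENNReal.tsum_le_tsum fun k => ?_
              refine (hKcompl k).trans_eq ?_
              rw [show k + 2 = 1 + 1 + k from by omega]
          _ = b * 2⁻¹ ^ 1 := MMgeom_aux b 1
          _ = b * 2⁻¹ := by rw [pow_one]
      have huniv : (1 : ℝ≥0∞) ≤ μ (⋂ k, K k) + μ ((⋂ k, K k)ᶜ) := by
        calc (1 : ℝ≥0∞) = μ ((⋂ k, K k) ∪ (⋂ k, K k)ᶜ) := by
              rw [union_compl_self, measure_univ]
          _ ≤ μ (⋂ k, K k) + μ ((⋂ k, K k)ᶜ) := measure_union_le _ _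
      have h4 : 1 - μ ((⋂ k, K k)ᶜ) ≤ μ (⋂ k, K k) := tsub_le_iff_right.2 huniv
      have h3 : (1 : ℝ≥0∞) - b * 2⁻¹ ≤ 1 - μ ((⋂ k, K k)ᶜ) := tsub_le_tsub_left hMcompl 1
      have h2 : ENNReal.ofReal (1 - κ₀) < 1 - b * 2⁻¹ := by
        refine (ENNReal.cancel_of_ne (ENNReal.mul_ne_top hbtop (by simp))).lt_tsub_of_add_lt_right ?_
        have hb2 : b * 2⁻¹ < b := by
          have := ENNReal.mul_lt_mul_right hb0 hbtop (ENNReal.inv_lt_one.2 ENNReal.one_lt_two)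
          simpa using this
        calc ENNReal.ofReal (1 - κ₀) + b * 2⁻¹ < ENNReal.ofReal (1 - κ₀) + b :=
              ENNReal.add_lt_add_left ENNReal.ofReal_ne_top hb2
          _ = 1 := by
              rw [hbdef, ← ENNReal.ofReal_add (by linarith [hκ₀le]) hκ₀pos.le]
              norm_num
      have h1 : ENNReal.ofReal (1 - κ) ≤ ENNReal.ofReal (1 - κ₀) :=
        ENNReal.ofReal_le_ofReal (by simp [hκ₀def]; linarith [min_le_left κ 2⁻¹])
      exact h1.trans_lt (h2.trans_le (h3.trans h4))
    · -- mean equicontinuity on M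
      intro x hx ε hε
      obtain ⟨k, hk⟩ := exists_pow_lt_of_lt_one (half_pos hε) (by norm_num : (2 : ℝ)⁻¹ < 1)
      have hxK : x ∈ K k := mem_iInter.1 hx k
      obtain ⟨j, hjmem, hxF⟩ := mem_iUnion₂.1 hxK
      set S : Set X := ⋃ j' ∈ (Finset.range (J k + 1)).erase j, F k j' with hS
      have hScomp : IsCompact S :=
        ((Finset.range (J k + 1)).erase j).finite_toSet.isCompact_biUnion (fun j' _ => hFc k j')
      have hxS : x ∉ S := by
        intro hxS'
        obtain ⟨j', hj', hxF'⟩ := mem_iUnion₂.1 hxS'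
        have hne : j' ≠ j := (Finset.mem_erase.1 hj').1
        have h1 : x ∈ E k j := hFE k j hxF
        have h2 : x ∈ E k j' := hFE k j' hxF'
        rcases hne.lt_or_gt with hlt | hlt
        · exact hEdisj k j' j hlt x h2 h1
        · exact hEdisj k j j' hlt x h1 h2
      have key : ∃ δ > (0 : ℝ), ∀ y, y ∈ ⋂ k', K k' → dist x y ≤ δ → y ∈ F k j := by
        rcases eq_empty_or_nonempty S with hSe | hSne
        · refine ⟨1, one_pos, fun y hy _ => ?_⟩
          obtain ⟨j', hj', hyF⟩ := mem_iUnion₂.1 (mem_iInter.1 hy k)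
          rcases eq_or_ne j' j with rfl | hne
          · exact hyF
          · exfalso
            have : y ∈ S := mem_iUnion₂.2 ⟨j', Finset.mem_erase.2 ⟨hne, hj'⟩, hyF⟩
            rw [hSe] at this
            exact notMem_empty y this
        · have hpos : 0 < infDist x S := (hScomp.isClosed.notMem_iff_infDist_pos hSne).1 hxS
          refine ⟨infDist x S / 2, half_pos hpos, fun y hy hxy => ?_⟩
          obtain ⟨j', hj', hyF⟩ := mem_iUnion₂.1 (mem_iInter.1 hy k)
          rcases eq_or_ne j' j with rfl | hne
          · exact hyF
          · exfalso
            have hyS : y ∈ S := mem_iUnion₂.2 ⟨j', Finset.mem_erase.2 ⟨hne, hj'⟩, hyF⟩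
            have := infDist_le_dist_of_mem (x := x) hyS
            linarith
      obtain ⟨δ, hδ, hkey⟩ := key
      refine ⟨δ, hδ, fun y hy hxy => ?_⟩
      have hyF := hkey y hy hxy
      have hxC : besicovitch T x (f j) < 2⁻¹ ^ k := hEC k j (hFE k j hxF)
      have hyC : besicovitch T y (f j) < 2⁻¹ ^ k := hEC k j (hFE k j hyF)
      have hb : besicovitch T x y < ε := by
        calc besicovitch T x y
            ≤ besicovitch T x (f j) + besicovitch T (f j) y := besicovitch_triangle T x (f j) y
          _ = besicovitch T x (f j) + besicovitch T y (f j) := by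
              rw [besicovitch_symm T (f j) y]
          _ < 2⁻¹ ^ k + 2⁻¹ ^ k := add_lt_add hxC hyC
          _ < ε := by linarith
      exact upperDensity_lt_of_bes_lt T hb
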